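/- Let κ be an infinite cardinal and (X_α)_{α<κ} topological spaces. Suppose there is a decreasing sequence (I_n)_{n∈ω} of nonempty subsets of κ with ⋂_{n∈ω} I_n = ∅ such that for every n ∈ ω the product ∏_{α∈I_n} X_α contains a closed discrete subset of cardinality δ_n, where δ_n = d(∏_{α∈κ∖I_n} X_α). Then the product space ∏_{α<κ} X_α is e-separable. -/

import Mathlib

open Cardinal Set

universe u

/-- A subset `D` of a topological space is closed discrete iff it is closed and
its subspace topology is discrete. -/
def ClosedDiscrete {X : Type u} [TopologicalSpace X] (D : Set X) : Prop :=
  IsClosed D ∧ DiscreteTopology D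

/-- A space is `e`-separable iff it has a dense set which is a countable union of
closed discrete sets. -/
def ESeparable (X : Type u) [TopologicalSpace X] : Prop :=
  ∃ D : ℕ → Set X, (∀ n, ClosedDiscrete (D n)) ∧ Dense (⋃ n, D n)

/-- The density of a space: the least cardinality of a dense subset. -/
noncomputable def density (X : Type u) [TopologicalSpace X] : Cardinal.{u} :=
  sInf {c | ∃ D : Set X, Dense D ∧ #D = c}

/-- The extent of a space: the supremum of the cardinalities of closed discrete subsets. -/
noncomputable def extent (X : Type u) [TopologicalSpace X] : Cardinal.{u} :=
  sSup {c | ∃ D : Set X, ClosedDiscrete D ∧ #D = c}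

lemma density_attained (X : Type u) [TopologicalSpace X] :
    ∃ S : Set X, Dense S ∧ #S = density X := by
  have hne : {c | ∃ D : Set X, Dense D ∧ #D = c}.Nonempty :=
    ⟨#(Set.univ : Set X), Set.univ, dense_univ, rfl⟩
  obtain ⟨S, hS, hc⟩ := csInf_mem hne
  exact ⟨S, hS, hc⟩

lemma discrete_exists_open {Y : Type u} [TopologicalSpace Y] {s : Set Y}
    (hs : DiscreteTopology s) (x : ↥s) :
    ∃ t : Set Y, IsOpen t ∧ (Subtype.val ⁻¹' t : Set s) = {x} := by
  have h : IsOpen ({x} : Set s) := isOpen_discrete _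
  rwa [isOpen_induced_iff] at h

open Classical in
noncomputable def glueFn {A : Type u} (X : A → Type u) (J : Set A)
    (d : ∀ a : ↥J, X a.1) (s : ∀ a : ↥(Jᶜ), X a.1) : ∀ a, X a :=
  fun a => if h : a ∈ J then d ⟨a, h⟩ else s ⟨a, h⟩

def res1 {A : Type u} {X : A → Type u} (J : Set A) (x : ∀ a, X a) : ∀ a : ↥J, X a.1 :=
  fun a => x a.1

def res2 {A : Type u} {X : A → Type u} (J : Set A) (x : ∀ a, X a) : ∀ a : ↥(Jᶜ), X a.1 :=
  fun a => x a.1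

lemma res1_glue {A : Type u} (X : A → Type u) (J : Set A)
    (d : ∀ a : ↥J, X a.1) (s : ∀ a : ↥(Jᶜ), X a.1) :
    res1 J (glueFn X J d s) = d := by
  funext a; exact dif_pos a.2

lemma res2_glue {A : Type u} (X : A → Type u) (J : Set A)
    (d : ∀ a : ↥J, X a.1) (s : ∀ a : ↥(Jᶜ), X a.1) :
    res2 J (glueFn X J d s) = s := by
  funext a; exact dif_neg a.2

lemma glue_res {A : Type u} (X : A → Type u) (J : Set A) (x : ∀ a, X a) :
    glueFn X J (res1 J x) (res2 J x) = x := by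
  funext a
  by_cases h : a ∈ J
  · simp only [glueFn, dif_pos h]; rfl
  · simp only [glueFn, dif_neg h]; rfl

lemma glue_apply_notMem {A : Type u} (X : A → Type u) (J : Set A)
    (d : ∀ a : ↥J, X a.1) (s : ∀ a : ↥(Jᶜ), X a.1) {a : A} (h : a ∉ J) :
    glueFn X J d s a = s ⟨a, h⟩ := dif_neg h

lemma continuous_res1 {A : Type u} {X : A → Type u} [∀ a, TopologicalSpace (X a)]
    (J : Set A) : Continuous (res1 (X := X) J) :=
  continuous_pi fun a => continuous_apply a.1

/-- If there is a decreasing sequence `(I n)` of nonempty subsets of `κ` with empty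
intersection such that `∏_{α ∈ I n} X_α` has a closed discrete subset of
cardinality `d(∏_{α ∈ κ ∖ I n} X_α)` for each `n`, then `∏_{α<κ} X_α` is
`e`-separable. -/
theorem eSeparable_of_glueing (κ : Cardinal.{u}) (hκ : ℵ₀ ≤ κ)
    (X : κ.out → Type u) [∀ a, TopologicalSpace (X a)] [∀ a, T1Space (X a)]
    (I : ℕ → Set κ.out)
    (hdec : ∀ n, I (n + 1) ⊆ I n)
    (hne : ∀ n, (I n).Nonempty)
    (hint : ⋂ n, I n = ∅)
    (hcd : ∀ n, ∃ D : Set (∀ a : ↥(I n), X a.1), ClosedDiscrete D ∧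
      #D = density (∀ a : ↥((I n)ᶜ), X a.1)) :
    ESeparable (∀ a, X a) := by
  classical
  choose D hDcd hDcard using hcd
  choose S hSd hScard using fun n => density_attained (∀ a : ↥((I n)ᶜ), X a.1)
  have f : ∀ n, ↥(D n) ≃ ↥(S n) := fun n =>
    (Cardinal.eq.mp ((hDcard n).trans (hScard n).symm)).some
  set g : ∀ n, ↥(D n) → (∀ a, X a) :=
    fun n d => glueFn X (I n) d.1 ((f n) d).1 with hg
  set E : ℕ → Set (∀ a, X a) := fun n => Set.range (g n) with hE
  have hres1g : ∀ n (d : ↥(D n)), res1 (I n) (g n d) = d.1 := fun n d => res1_glue ..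
  have hres2g : ∀ n (d : ↥(D n)), res2 (I n) (g n d) = ((f n) d).1 := fun n d => res2_glue ..
  refine ⟨E, fun n => ⟨?_, ?_⟩, ?_⟩
  · -- closed
    rw [← isOpen_compl_iff, isOpen_iff_forall_mem_open]
    intro x hx
    by_cases h1 : res1 (I n) x ∈ D n
    · have hx2 : res2 (I n) x ≠ ((f n) ⟨res1 (I n) x, h1⟩).1 := by
        intro he
        apply hx
        refine ⟨⟨res1 (I n) x, h1⟩, ?_⟩
        show glueFn X (I n) (res1 (I n) x) ((f n) ⟨res1 (I n) x, h1⟩).1 = x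
        rw [← he, glue_res]
      obtain ⟨b, hb⟩ := Function.ne_iff.mp hx2
      obtain ⟨t, htO, hts⟩ := discrete_exists_open (hDcd n).2 ⟨res1 (I n) x, h1⟩
      refine ⟨res1 (I n) ⁻¹' t ∩ (fun y : ∀ a, X a => y b.1) ⁻¹'
          ({((f n) ⟨res1 (I n) x, h1⟩).1 b}ᶜ), ?_, ?_, ?_, ?_⟩
      · rintro z ⟨hz1, hz2⟩ ⟨d', hd'⟩
        have hzr : res1 (I n) z = d'.1 := by rw [← hd']; exact hres1g n d'
        have hd't : d' ∈ (Subtype.val ⁻¹' t : Set (D n)) := by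
          show d'.1 ∈ t; rw [← hzr]; exact hz1
        rw [hts] at hd't
        have hd'eq : d' = ⟨res1 (I n) x, h1⟩ := hd't
        have : z b.1 = ((f n) ⟨res1 (I n) x, h1⟩).1 b := by
          have h2 : res2 (I n) z = ((f n) d').1 := by rw [← hd']; exact hres2g n d'
          have : res2 (I n) z b = ((f n) ⟨res1 (I n) x, h1⟩).1 b := by rw [h2, hd'eq]
          exact this
        exact hz2 this
      · exact (htO.preimage (continuous_res1 _)).inter
          (isOpen_compl_singleton.preimage (continuous_apply b.1))
      · have hmem : (⟨res1 (I n) x, h1⟩ : ↥(D n)) ∈ (Subtype.val ⁻¹' t : Set (D n)) := by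
          rw [hts]; rfl
        exact hmem
      · exact hb
    · refine ⟨res1 (I n) ⁻¹' (D n)ᶜ, ?_, (hDcd n).1.isOpen_compl.preimage (continuous_res1 _), h1⟩
      rintro z hz ⟨d', hd'⟩
      exact hz (by rw [← hd', hres1g n d']; exact d'.2)
  · -- discrete
    rw [discreteTopology_iff_isOpen_singleton]
    rintro ⟨x, hx⟩
    obtain ⟨d, hd⟩ := hx
    obtain ⟨t, htO, hts⟩ := discrete_exists_open (hDcd n).2 d
    have : ({⟨x, ⟨d, hd⟩⟩} : Set ↥(E n)) = Subtype.val ⁻¹' (res1 (I n) ⁻¹' t) := by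
      ext ⟨y, hy⟩
      simp only [Set.mem_singleton_iff, Set.mem_preimage, Subtype.mk.injEq]
      constructor
      · intro h
        show res1 (I n) y ∈ t
        rw [Subtype.mk.inj h, ← hd, hres1g n d]
        have : d ∈ (Subtype.val ⁻¹' t : Set (D n)) := by rw [hts]; rfl
        exact this
      · intro hyt
        obtain ⟨d', hd'⟩ := hy
        have hd't : d' ∈ (Subtype.val ⁻¹' t : Set (D n)) := by
          show d'.1 ∈ t
          rw [← hres1g n d', hd']; exact hyt
        rw [hts] at hd't
        have : d' = d := hd't
        exact Subtype.ext (show y = x by rw [← hd', this, hd])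
    rw [this]
    exact (htO.preimage (continuous_res1 _)).preimage continuous_subtype_val
  · -- dense
    have hmono : ∀ {m k : ℕ}, m ≤ k → I k ⊆ I m := by
      intro m k h
      induction h with
      | refl => exact subset_rfl
      | step h2 ih => exact (hdec _).trans ih
    have hnotmem : ∀ a : κ.out, ∃ m, a ∉ I m := by
      intro a
      by_contra h
      push_neg at h
      have : a ∈ ⋂ n, I n := mem_iInter.mpr h
      rw [hint] at this
      exact this
    choose na hna using hnotmem
    rw [dense_iff_inter_open]
    intro U hU hUne
    obtain ⟨y, hy⟩ := hUne
    obtain ⟨F, u, hu, hsub⟩ := (isOpen_pi_iff.mp hU) y hy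
    set N := F.sup na with hN
    have hFc : ∀ a ∈ F, a ∈ (I N)ᶜ := fun a ha hmem =>
      hna a (hmono (Finset.le_sup ha) hmem)
    set W : Set (∀ a : ↥((I N)ᶜ), X a.1) :=
      ⋂ p ∈ F.attach, (fun z : ∀ a : ↥((I N)ᶜ), X a.1 => z ⟨p.1, hFc p.1 p.2⟩) ⁻¹' (u p.1)
      with hW
    have hWopen : IsOpen W :=
      isOpen_biInter_finset fun p _ => ((hu p.1 p.2).1).preimage (continuous_apply (A := fun a : ↥((I N)ᶜ) => X a.1) ⟨p.1, hFc p.1 p.2⟩)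
    have hyW : res2 (I N) y ∈ W := mem_iInter₂.mpr fun p _ => (hu p.1 p.2).2
    obtain ⟨s, hsW, hsS⟩ := (hSd N).inter_open_nonempty W hWopen ⟨_, hyW⟩
    set d := (f N).symm ⟨s, hsS⟩ with hd
    have hfd : ((f N) d).1 = s := by rw [hd, Equiv.apply_symm_apply]
    refine ⟨g N d, hsub ?_, mem_iUnion.mpr ⟨N, ⟨d, rfl⟩⟩⟩
    rw [Set.mem_pi]
    intro a ha
    show glueFn X (I N) d.1 ((f N) d).1 a ∈ u a
    rw [glue_apply_notMem X (I N) _ _ (hFc a ha), hfd]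
    exact mem_iInter₂.mp hsW ⟨a, ha⟩ (Finset.mem_attach _ _)
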